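/- Let A and B be unital rings and let F : Mod-B → Mod-A be an additive equivalence between the categories of right B-modules and right A-modules. Then E := F(B), the image of the right regular module B, is a finitely generated projective right A-module. -/

import Mathlib

universe u

open CategoryTheory Submodule

/-- If `F : Mod-B → Mod-A` is an additive equivalence between the
categories of right `B`-modules and right `A`-modules (realized as left modules over the
opposite rings), then `E := F(B)`, the image of the right regular module, is a finitely
generated projective right `A`-module. -/
theorem finite_projective_of_additive_equivalence (A B : Type u) [Ring A] [Ring B]
    (F : ModuleCat.{u} Bᵐᵒᵖ ≌ ModuleCat.{u} Aᵐᵒᵖ) [F.functor.Additive] :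
    Module.Finite Aᵐᵒᵖ (F.functor.obj (ModuleCat.of Bᵐᵒᵖ Bᵐᵒᵖ)) ∧
    Module.Projective Aᵐᵒᵖ (F.functor.obj (ModuleCat.of Bᵐᵒᵖ Bᵐᵒᵖ)) := by
  classical
  set E := F.functor.obj (ModuleCat.of Bᵐᵒᵖ Bᵐᵒᵖ) with hE
  set G := F.inverse with hG
  -- projectivity
  have hBproj : Projective (ModuleCat.of Bᵐᵒᵖ Bᵐᵒᵖ) :=
    (IsProjective.iff_projective _).mp inferInstance
  have hEproj : Projective E := (F.map_projective_iff _).mpr hBproj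
  have hproj : Module.Projective Aᵐᵒᵖ E := by
    rw [IsProjective.iff_projective]
    exact Projective.of_iso (Iso.refl _) hEproj
  refine ⟨?_, hproj⟩
  -- finiteness
  rw [Module.finite_def, Submodule.fg_iff_compact,
    CompleteLattice.isCompactElement_iff_le_of_directed_sSup_le]
  intro s hne hdir hsup
  let ι : ∀ N : Submodule Aᵐᵒᵖ E, ModuleCat.of Aᵐᵒᵖ N ⟶ E := fun N => ModuleCat.ofHom N.subtype
  let Msub : Submodule Aᵐᵒᵖ E → Submodule Bᵐᵒᵖ (G.obj E) :=
    fun N => LinearMap.range (G.map (ι N)).hom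
  have hmono : ∀ N N' : Submodule Aᵐᵒᵖ E, N ≤ N' → Msub N ≤ Msub N' := by
    intro N N' h
    rintro x ⟨y, rfl⟩
    refine ⟨G.map (ModuleCat.ofHom (Submodule.inclusion h)) y, ?_⟩
    have : ι N = ModuleCat.ofHom (Submodule.inclusion h) ≫ ι N' := rfl
    rw [this, G.map_comp]
    rfl
  set K := sSup (Msub '' s) with hK
  have hKtop : K = ⊤ := by
    let q : G.obj E ⟶ ModuleCat.of Bᵐᵒᵖ ((G.obj E) ⧸ K) := ModuleCat.ofHom K.mkQ
    let φ : E ⟶ F.functor.obj (ModuleCat.of Bᵐᵒᵖ ((G.obj E) ⧸ K)) :=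
      (F.counitIso.app E).inv ≫ F.functor.map q
    have hφ0 : ∀ N ∈ s, ι N ≫ φ = 0 := by
      intro N hN
      have h1 : G.map (ι N) ≫ q = 0 := by
        ext x
        have hx : G.map (ι N) x ∈ Msub N := ⟨x, rfl⟩
        have hmem : Msub N ∈ Msub '' s := ⟨N, hN, rfl⟩
        have hx' : G.map (ι N) x ∈ K := le_sSup hmem hx
        change Submodule.Quotient.mk _ = (0 : (G.obj E) ⧸ K)
        exact (Submodule.Quotient.mk_eq_zero K).mpr hx'
      have h3 : F.functor.map (G.map (ι N)) ≫ F.functor.map q = 0 := by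
        rw [← Functor.map_comp, h1, Functor.map_zero]
      have h4 : (F.counit.app (ModuleCat.of Aᵐᵒᵖ N) ≫ ι N ≫ F.counitInv.app E) ≫
          F.functor.map q = 0 := by
        rw [← F.fun_inv_map]; exact h3
      calc ι N ≫ φ
          = F.counitInv.app (ModuleCat.of Aᵐᵒᵖ N) ≫
              (F.counit.app (ModuleCat.of Aᵐᵒᵖ N) ≫ ι N ≫ F.counitInv.app E) ≫
              F.functor.map q := by simp [φ]
        _ = 0 := by rw [h4, Limits.comp_zero]
    have hφeq0 : φ = 0 := by
      ext x
      have hker : sSup s ≤ LinearMap.ker φ.hom := by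
        refine sSup_le ?_
        intro N hN y hy
        have h := ConcreteCategory.congr_hom (hφ0 N hN) ⟨y, hy⟩
        simpa [ι] using h
      exact hker (hsup trivial)
    have hq0 : q = 0 := by
      apply F.functor.map_injective
      rw [Functor.map_zero]
      have : F.functor.map q = (F.counitIso.app E).hom ≫ φ := by
        rw [show φ = (F.counitIso.app E).inv ≫ F.functor.map q from rfl,
          ← Category.assoc, Iso.hom_inv_id, Category.id_comp]
      rw [this, hφeq0, Limits.comp_zero]
    have : LinearMap.ker q.hom = ⊤ := by rw [hq0]; exact LinearMap.ker_zero
    rw [← Submodule.ker_mkQ K]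
    exact this
  -- the distinguished element
  let η : ModuleCat.of Bᵐᵒᵖ Bᵐᵒᵖ ≅ G.obj E := F.unitIso.app (ModuleCat.of Bᵐᵒᵖ Bᵐᵒᵖ)
  let b : G.obj E := η.hom (1 : Bᵐᵒᵖ)
  have hb : b ∈ K := by rw [hKtop]; trivial
  have hdir' : DirectedOn (· ≤ ·) (Msub '' s) := by
    rintro _ ⟨N, hN, rfl⟩ _ ⟨N', hN', rfl⟩
    obtain ⟨P, hP, h1, h2⟩ := hdir N hN N' hN'
    exact ⟨Msub P, ⟨P, hP, rfl⟩, hmono _ _ h1, hmono _ _ h2⟩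
  obtain ⟨_, ⟨N, hN, rfl⟩, hbN⟩ :=
    (Submodule.mem_sSup_of_directed (hne.image _) hdir').mp hb
  refine ⟨N, hN, ?_⟩
  -- Msub N = ⊤
  have hMtop : Msub N = ⊤ := by
    rw [eq_top_iff]
    intro y _
    set r : Bᵐᵒᵖ := η.inv y with hr
    have h1 : η.hom (η.inv y) = y := ConcreteCategory.congr_hom η.inv_hom_id y
    have h2 : y = r • b := by
      have h3 : η.inv y = r • (1 : Bᵐᵒᵖ) := by rw [smul_eq_mul, mul_one]
      rw [← h1, h3, map_smul]
    rw [h2]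
    exact Submodule.smul_mem _ _ hbN
  have hsurj : Function.Surjective (G.map (ι N)) := by
    rw [← LinearMap.range_eq_top]
    exact hMtop
  have hepi : Epi (G.map (ι N)) := (ModuleCat.epi_iff_surjective _).mpr hsurj
  have hepiι : Epi (ι N) := G.epi_of_epi_map hepi
  have hsurjι : Function.Surjective (ι N) := (ModuleCat.epi_iff_surjective _).mp hepiι
  intro x _
  obtain ⟨y, hy⟩ := hsurjι x
  exact hy ▸ y.2
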